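/- In the group G = ⟨a, b | b^{-1}a²b = a^{-2}, a^{-1}b²a = b^{-2}⟩, the subgroup H generated by x = a², y = b², and z = (ab)² is normal in G, and the quotient G/H is a Klein fours group generated by the images of a and b. -/

import Mathlib

noncomputable section

/-- The relators `b⁻¹a²ba²` and `a⁻¹b²ab²` of the Promislow group. -/
def promislowRels : Set (FreeGroup (Fin 2)) :=
  {(FreeGroup.of 1)⁻¹ * (FreeGroup.of 0) ^ 2 * FreeGroup.of 1 * (FreeGroup.of 0) ^ 2,
   (FreeGroup.of 0)⁻¹ * (FreeGroup.of 1) ^ 2 * FreeGroup.of 0 * (FreeGroup.of 1) ^ 2}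

/-- The Promislow group `G = ⟨a, b | b⁻¹a²b = a⁻², a⁻¹b²a = b⁻²⟩`. -/
abbrev PromislowGroup := PresentedGroup promislowRels

/-- The generator `a` of the Promislow group. -/
def pa : PromislowGroup := PresentedGroup.of 0

/-- The generator `b` of the Promislow group. -/
def pb : PromislowGroup := PresentedGroup.of 1

/-- The element `z = (ab)²` of the Promislow group. -/
def pz : PromislowGroup := (pa * pb) ^ 2

/-- The subgroup `H = ⟨a², b², (ab)²⟩` is normal in the Promislow group `G`, the quotient
`G/H` has exponent `2` (every square lies in `H`), has order `4`, and is generated by the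
images of `a` and `b` (i.e. `⟨a, b⟩ ⊔ H = ⊤`): it is a Klein fours group. -/
-- auxiliary lemmas

lemma rel_one_of_mem {r : FreeGroup (Fin 2)} (h : r ∈ promislowRels) :
    PresentedGroup.mk promislowRels r = 1 :=
  (QuotientGroup.eq_one_iff r).mpr (Subgroup.subset_normalClosure h)

lemma rel1 : pb⁻¹ * pa ^ 2 * pb * pa ^ 2 = 1 := by
  have h := rel_one_of_mem (r := (FreeGroup.of 1)⁻¹ * (FreeGroup.of 0) ^ 2 * FreeGroup.of 1 * (FreeGroup.of 0) ^ 2)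
    (by left; rfl)
  simpa [pa, pb, PresentedGroup.of, map_mul, map_pow, map_inv] using h

lemma rel2 : pa⁻¹ * pb ^ 2 * pa * pb ^ 2 = 1 := by
  have h := rel_one_of_mem (r := (FreeGroup.of 0)⁻¹ * (FreeGroup.of 1) ^ 2 * FreeGroup.of 0 * (FreeGroup.of 1) ^ 2)
    (by right; rfl)
  simpa [pa, pb, PresentedGroup.of, map_mul, map_pow, map_inv] using h

lemma closure_ab : Subgroup.closure ({pa, pb} : Set PromislowGroup) = ⊤ := by
  rw [eq_top_iff]
  intro x _
  refine PresentedGroup.generated_by _ _ (fun j => ?_) x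
  fin_cases j
  · exact Subgroup.subset_closure (by left; rfl)
  · exact Subgroup.subset_closure (by right; rfl)

-- conjugation identities
lemma rel1' : pa ^ 2 * pb * pa ^ 2 * pb⁻¹ = 1 := by
  calc pa ^ 2 * pb * pa ^ 2 * pb⁻¹ = pb * (pb⁻¹ * pa ^ 2 * pb * pa ^ 2) * pb⁻¹ := by
        simp [mul_assoc]
  _ = 1 := by rw [rel1]; group

lemma rel2' : pb ^ 2 * pa * pb ^ 2 * pa⁻¹ = 1 := by
  calc pb ^ 2 * pa * pb ^ 2 * pa⁻¹ = pa * (pa⁻¹ * pb ^ 2 * pa * pb ^ 2) * pa⁻¹ := by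
        simp [mul_assoc]
  _ = 1 := by rw [rel2]; group

lemma ca1 : pa * pa ^ 2 * pa⁻¹ = pa ^ 2 := by group
lemma ca1' : pa⁻¹ * pa ^ 2 * pa = pa ^ 2 := by group
lemma ca2 : pa * pb ^ 2 * pa⁻¹ = (pb ^ 2)⁻¹ := by
  calc pa * pb ^ 2 * pa⁻¹ = (pb ^ 2)⁻¹ * (pb ^ 2 * pa * pb ^ 2 * pa⁻¹) := by simp [mul_assoc]
  _ = (pb ^ 2)⁻¹ := by rw [rel2']; group
lemma ca2' : pa⁻¹ * pb ^ 2 * pa = (pb ^ 2)⁻¹ := by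
  calc pa⁻¹ * pb ^ 2 * pa = (pb ^ 2)⁻¹ * (pb ^ 2 * (pa⁻¹ * pb ^ 2 * pa * pb ^ 2) * (pb ^ 2)⁻¹) := by
        simp [mul_assoc]
  _ = (pb ^ 2)⁻¹ := by rw [rel2]; group
lemma cb1 : pb * pa ^ 2 * pb⁻¹ = (pa ^ 2)⁻¹ := by
  calc pb * pa ^ 2 * pb⁻¹ = (pa ^ 2)⁻¹ * (pa ^ 2 * pb * pa ^ 2 * pb⁻¹) := by simp [mul_assoc]
  _ = (pa ^ 2)⁻¹ := by rw [rel1']; group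
lemma cb1' : pb⁻¹ * pa ^ 2 * pb = (pa ^ 2)⁻¹ := by
  calc pb⁻¹ * pa ^ 2 * pb = (pa ^ 2)⁻¹ * (pa ^ 2 * (pb⁻¹ * pa ^ 2 * pb * pa ^ 2) * (pa ^ 2)⁻¹) := by
        simp [mul_assoc]
  _ = (pa ^ 2)⁻¹ := by rw [rel1]; group
lemma cb2 : pb * pb ^ 2 * pb⁻¹ = pb ^ 2 := by group
lemma cb2' : pb⁻¹ * pb ^ 2 * pb = pb ^ 2 := by group

lemma e1' : pa ^ 2 * pb⁻¹ = pb⁻¹ * (pa ^ 2)⁻¹ := by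
  calc pa ^ 2 * pb⁻¹ = pb⁻¹ * (pa ^ 2)⁻¹ * (pa ^ 2 * pb * pa ^ 2 * pb⁻¹) := by simp [mul_assoc]
  _ = pb⁻¹ * (pa ^ 2)⁻¹ := by rw [rel1']; group

lemma e2 : pb ^ 2 * pa = pa * (pb ^ 2)⁻¹ := by
  calc pb ^ 2 * pa = pa * (pb ^ 2)⁻¹ * (pb ^ 2 * (pa⁻¹ * pb ^ 2 * pa * pb ^ 2) * (pb ^ 2)⁻¹) := by
        simp [mul_assoc]
  _ = pa * (pb ^ 2)⁻¹ := by rw [rel2]; group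

lemma key : pz * (pb * pa) ^ 2 = 1 := by
  calc pz * (pb * pa) ^ 2 = pa * pb * pa * (pb ^ 2 * pa) * pb * pa := by
        rw [pz]; simp [pow_two, mul_assoc]
  _ = pa * pb * pa * (pa * (pb ^ 2)⁻¹) * pb * pa := by rw [e2]
  _ = pa * pb * (pa ^ 2 * pb⁻¹) * pa := by simp [pow_two, mul_assoc, mul_inv_rev, inv_mul_cancel_left]
  _ = pa * pb * (pb⁻¹ * (pa ^ 2)⁻¹) * pa := by rw [e1']
  _ = 1 := by simp [pow_two, mul_assoc, mul_inv_rev, mul_inv_cancel_left]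

lemma cza' : pa⁻¹ * pz * pa = pz⁻¹ := by
  calc pa⁻¹ * pz * pa = pz⁻¹ * (pz * (pb * pa) ^ 2) := by
        rw [pz]; simp [pow_two, mul_assoc, mul_inv_rev, mul_inv_cancel_left, inv_mul_cancel_left]
  _ = pz⁻¹ := by rw [key]; group

lemma czb : pb * pz * pb⁻¹ = pz⁻¹ := by
  calc pb * pz * pb⁻¹ = pz⁻¹ * (pz * (pb * pa) ^ 2) := by
        rw [pz]; simp [pow_two, mul_assoc, mul_inv_rev, mul_inv_cancel_left, inv_mul_cancel_left]
  _ = pz⁻¹ := by rw [key]; group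

lemma cza : pa * pz * pa⁻¹ = pz⁻¹ := by
  calc pa * pz * pa⁻¹ = pa * (pz * (pb * pa) ^ 2) * pa⁻¹ * pz⁻¹ := by
        rw [pz]; simp [pow_two, mul_assoc, mul_inv_rev, mul_inv_cancel_left, inv_mul_cancel_left]
  _ = pz⁻¹ := by rw [key]; group

lemma czb' : pb⁻¹ * pz * pb = pz⁻¹ := by
  calc pb⁻¹ * pz * pb = pb⁻¹ * (pz * (pb * pa) ^ 2) * pb * pz⁻¹ := by
        rw [pz]; simp [pow_two, mul_assoc, mul_inv_rev, mul_inv_cancel_left, inv_mul_cancel_left]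
  _ = pz⁻¹ := by rw [key]; group

-- Normality machinery
lemma conj_closure_le {G : Type*} [Group G] (S : Set G) (t : G)
    (h1 : ∀ s ∈ S, t * s * t⁻¹ ∈ Subgroup.closure S) :
    ∀ g ∈ Subgroup.closure S, t * g * t⁻¹ ∈ Subgroup.closure S := by
  intro g hg
  have hmap : (Subgroup.closure S).map (MulAut.conj t).toMonoidHom ≤ Subgroup.closure S := by
    rw [MonoidHom.map_closure, Subgroup.closure_le]
    rintro x ⟨s, hs, rfl⟩
    simpa using h1 s hs
  have : (MulAut.conj t).toMonoidHom g ∈ Subgroup.closure S := hmap ⟨g, hg, rfl⟩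
  simpa using this

lemma mem_normalizer_closure {G : Type*} [Group G] (S : Set G) (t : G)
    (h1 : ∀ s ∈ S, t * s * t⁻¹ ∈ Subgroup.closure S)
    (h2 : ∀ s ∈ S, t⁻¹ * s * t ∈ Subgroup.closure S) :
    t ∈ Subgroup.normalizer (Subgroup.closure S : Set G) := by
  rw [Subgroup.mem_normalizer_iff]
  intro h
  constructor
  · exact fun hh => conj_closure_le S t h1 h hh
  · intro hh
    have := conj_closure_le S t⁻¹ (by simpa using h2) _ hh
    simpa [mul_assoc] using this

def Nsub : Subgroup PromislowGroup := Subgroup.closure {pa ^ 2, pb ^ 2, pz}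

lemma mem_Nsub {s : PromislowGroup} (h : s ∈ ({pa ^ 2, pb ^ 2, pz} : Set PromislowGroup)) :
    s ∈ Nsub := Subgroup.subset_closure h

lemma normal_Nsub : Nsub.Normal := by
  rw [← Subgroup.normalizer_eq_top_iff, eq_top_iff, ← closure_ab, Subgroup.closure_le]
  rintro t (rfl | rfl)
  · refine mem_normalizer_closure _ _ ?_ ?_
    · rintro s (rfl | rfl | rfl)
      · rw [ca1]; exact mem_Nsub (by left; rfl)
      · rw [ca2]; exact inv_mem (mem_Nsub (by right; left; rfl))
      · rw [cza]; exact inv_mem (mem_Nsub (by right; right; rfl))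
    · rintro s (rfl | rfl | rfl)
      · rw [ca1']; exact mem_Nsub (by left; rfl)
      · rw [ca2']; exact inv_mem (mem_Nsub (by right; left; rfl))
      · rw [cza']; exact inv_mem (mem_Nsub (by right; right; rfl))
  · refine mem_normalizer_closure _ _ ?_ ?_
    · rintro s (rfl | rfl | rfl)
      · rw [cb1]; exact inv_mem (mem_Nsub (by left; rfl))
      · rw [cb2]; exact mem_Nsub (by right; left; rfl)
      · rw [czb]; exact inv_mem (mem_Nsub (by right; right; rfl))
    · rintro s (rfl | rfl | rfl)
      · rw [cb1']; exact inv_mem (mem_Nsub (by left; rfl))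
      · rw [cb2']; exact mem_Nsub (by right; left; rfl)
      · rw [czb']; exact inv_mem (mem_Nsub (by right; right; rfl))

-- the Klein four group target
abbrev K4 := Multiplicative (ZMod 2) × Multiplicative (ZMod 2)

def fK : Fin 2 → K4 := ![(Multiplicative.ofAdd 1, 1), (1, Multiplicative.ofAdd 1)]

lemma fK_rels : ∀ r ∈ promislowRels, FreeGroup.lift fK r = 1 := by
  rintro r (rfl | rfl) <;>
    simp [map_mul, map_pow, map_inv, FreeGroup.lift_apply_of, fK] <;> decide

def phi : PromislowGroup →* K4 := PresentedGroup.toGroup fK_rels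

lemma phi_pa : phi pa = (Multiplicative.ofAdd 1, 1) := by
  simp [phi, pa, PresentedGroup.toGroup.of, fK]

lemma phi_pb : phi pb = (1, Multiplicative.ofAdd 1) := by
  simp [phi, pb, PresentedGroup.toGroup.of, fK]

lemma Nsub_le_ker : Nsub ≤ phi.ker := by
  rw [Nsub, Subgroup.closure_le]
  rintro s (rfl | rfl | rfl) <;>
    simp only [SetLike.mem_coe, MonoidHom.mem_ker, pz, map_pow, map_mul, phi_pa, phi_pb] <;> decide

instance : Nsub.Normal := normal_Nsub

abbrev Q := PromislowGroup ⧸ Nsub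

def qu : Q := QuotientGroup.mk' Nsub pa
def qv : Q := QuotientGroup.mk' Nsub pb

lemma mk_eq_one_of_mem {g : PromislowGroup} (h : g ∈ Nsub) : QuotientGroup.mk' Nsub g = 1 :=
  (QuotientGroup.eq_one_iff g).mpr h

lemma huu : qu * qu = 1 := by
  have := mk_eq_one_of_mem (mem_Nsub (by left; rfl))
  simpa [pow_two, map_pow, qu] using this

lemma hvv : qv * qv = 1 := by
  have := mk_eq_one_of_mem (mem_Nsub (by right; left; rfl))
  simpa [pow_two, map_pow, qv] using this

lemma huvuv : (qu * qv) * (qu * qv) = 1 := by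
  have := mk_eq_one_of_mem (mem_Nsub (show pz ∈ _ by right; right; rfl))
  rw [pz] at this
  simpa [pow_two, map_pow, map_mul, qu, qv] using this

lemma hinvu : qu⁻¹ = qu := inv_eq_of_mul_eq_one_right huu
lemma hinvv : qv⁻¹ = qv := inv_eq_of_mul_eq_one_right hvv

lemma hvu : qv * qu = qu * qv := by
  calc qv * qu = qu⁻¹ * ((qu * qv) * (qu * qv)) * qv⁻¹ := by
        simp [mul_assoc, inv_mul_cancel_left, mul_inv_cancel_right]
  _ = qu * qv := by rw [huvuv, hinvu, hinvv]; group

lemma huu' : ∀ w : Q, qu * (qu * w) = w := fun w => by rw [← mul_assoc, huu, one_mul]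
lemma hvv' : ∀ w : Q, qv * (qv * w) = w := fun w => by rw [← mul_assoc, hvv, one_mul]
lemma hvu' : ∀ w : Q, qv * (qu * w) = qu * (qv * w) := fun w => by
  rw [← mul_assoc, hvu, mul_assoc]

lemma quot_mem (q : Q) : q = 1 ∨ q = qu ∨ q = qv ∨ q = qu * qv := by
  obtain ⟨g, rfl⟩ := QuotientGroup.mk'_surjective Nsub q
  have hg : g ∈ Subgroup.closure ({pa, pb} : Set PromislowGroup) := by
    rw [closure_ab]; trivial
  induction hg using Subgroup.closure_induction with
  | mem x hx =>
      rcases hx with rfl | rfl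
      · right; left; rfl
      · right; right; left; rfl
  | one => left; exact map_one _
  | mul x y hx hy ihx ihy =>
      rw [map_mul]
      rcases ihx with h1 | h1 | h1 | h1 <;> rcases ihy with h2 | h2 | h2 | h2 <;>
        rw [h1, h2] <;>
        simp [mul_assoc, huu, hvv, hvu, huu', hvv', hvu']
  | inv x hx ihx =>
      rw [map_inv]
      rcases ihx with h1 | h1 | h1 | h1 <;> rw [h1] <;>
        simp [mul_inv_rev, hinvu, hinvv, mul_assoc, huu, hvv, hvu, huu', hvv', hvu']

def psi : Q →* K4 :=
  QuotientGroup.lift Nsub phi fun n hn => Nsub_le_ker hn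

lemma psi_mk (g : PromislowGroup) : psi (QuotientGroup.mk' Nsub g) = phi g := rfl

lemma psi_qu : psi qu = (Multiplicative.ofAdd 1, 1) := by rw [qu, psi_mk, phi_pa]
lemma psi_qv : psi qv = (1, Multiplicative.ofAdd 1) := by rw [qv, psi_mk, phi_pb]

lemma psi_bij : Function.Bijective psi := by
  constructor
  · rw [injective_iff_map_eq_one]
    intro q hq
    rcases quot_mem q with rfl | rfl | rfl | rfl
    · rfl
    · rw [psi_qu] at hq; exact absurd hq (by decide)
    · rw [psi_qv] at hq; exact absurd hq (by decide)
    · rw [map_mul, psi_qu, psi_qv] at hq; exact absurd hq (by decide)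
  · intro k
    have hk : ∀ x : K4, x = 1 ∨ x = (Multiplicative.ofAdd 1, 1) ∨
        x = (1, Multiplicative.ofAdd 1) ∨
        x = (Multiplicative.ofAdd 1, 1) * (1, Multiplicative.ofAdd 1) := by decide
    rcases hk k with rfl | rfl | rfl | rfl
    · exact ⟨1, map_one _⟩
    · exact ⟨qu, psi_qu⟩
    · exact ⟨qv, psi_qv⟩
    · exact ⟨qu * qv, by rw [map_mul, psi_qu, psi_qv]⟩

lemma card_Q : Nat.card Q = 4 := by
  rw [Nat.card_eq_of_bijective psi psi_bij]
  simp [Nat.card_eq_fintype_card]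

lemma squares (g : PromislowGroup) : g * g ∈ Nsub := by
  rw [← QuotientGroup.eq_one_iff]
  have : (QuotientGroup.mk (g * g) : Q) = QuotientGroup.mk' Nsub g * QuotientGroup.mk' Nsub g :=
    rfl
  rw [this]
  rcases quot_mem (QuotientGroup.mk' Nsub g) with h | h | h | h <;> rw [h]
  · exact one_mul 1
  · exact huu
  · exact hvv
  · exact huvuv


theorem quotient_is_klein_four :
    (Subgroup.closure {pa ^ 2, pb ^ 2, pz} : Subgroup PromislowGroup).Normal ∧
    (∀ g : PromislowGroup, g * g ∈ Subgroup.closure {pa ^ 2, pb ^ 2, pz}) ∧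
    Nat.card (PromislowGroup ⧸ (Subgroup.closure {pa ^ 2, pb ^ 2, pz})) = 4 ∧
    Subgroup.closure {pa, pb} ⊔ Subgroup.closure {pa ^ 2, pb ^ 2, pz} = ⊤ := by
  refine ⟨normal_Nsub, squares, card_Q, ?_⟩
  rw [closure_ab, top_sup_eq]
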